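/- (Natural prior gives convergence in one iteration) Suppose the prior covariance is Σ₀ = (Aᵀ A)⁻¹ and the first BayesCG search direction is s₁ = r₀/‖r₀‖₂ with r₀ = b − A x₀ ≠ 0. Then the first iterate x₁ = x₀ + Σ₀ Aᵀ s₁ (s₁ᵀ r₀) equals the exact solution: x₁ = x* = A⁻¹ b. -/

import Mathlib

open Matrix

/-- **natural prior gives convergence in one iteration.** With prior covariance
`Σ₀ = (Aᵀ A)⁻¹` and first search direction `s₁ = r₀/‖r₀‖₂` (Euclidean normalisation, valid
since `A Σ₀ Aᵀ = I`), the first BayesCG iterate `x₁ = x₀ + Σ₀ Aᵀ s₁ (s₁ᵀ r₀)` equals the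
exact solution `x* = A⁻¹ b`. -/
theorem natural_prior_one_step_convergence
    (d : ℕ)
    (A : Matrix (Fin d) (Fin d) ℝ) (hA : IsUnit A)
    (b : Fin d → ℝ)
    (x0 : Fin d → ℝ)
    (r0 : Fin d → ℝ) (hr0 : r0 = b - A *ᵥ x0) (hr0ne : r0 ≠ 0)
    (Sigma0 : Matrix (Fin d) (Fin d) ℝ) (hSigma0 : Sigma0 = (Aᵀ * A)⁻¹)
    (s1 : Fin d → ℝ) (hs1 : s1 = (Real.sqrt (r0 ⬝ᵥ r0))⁻¹ • r0)
    (x1 : Fin d → ℝ)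
    (hx1 : x1 = x0 + (s1 ⬝ᵥ r0) • ((Sigma0 * Aᵀ) *ᵥ s1)) :
    x1 = A⁻¹ *ᵥ b := by
  have hAT : IsUnit Aᵀ := by simpa using hA.map (transposeRingEquiv (Fin d) ℝ).toMonoidHom
  have hkey : Sigma0 * Aᵀ = A⁻¹ := by
    rw [hSigma0, Matrix.mul_inv_rev, Matrix.mul_assoc,
      Matrix.nonsing_inv_mul _ ((Matrix.isUnit_iff_isUnit_det _).mp hAT),
      Matrix.mul_one]
  have ht : (0 : ℝ) < r0 ⬝ᵥ r0 := by
    have h0 : 0 ≤ r0 ⬝ᵥ r0 := by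
      simpa using dotProduct_self_star_nonneg (R := ℝ) r0
    rcases h0.lt_or_eq with h | h
    · exact h
    · exact absurd (dotProduct_self_eq_zero.mp h.symm) hr0ne
  have hsq : Real.sqrt (r0 ⬝ᵥ r0) ^ 2 = r0 ⬝ᵥ r0 := Real.sq_sqrt ht.le
  have hsne : Real.sqrt (r0 ⬝ᵥ r0) ≠ 0 := by positivity
  rw [hx1, hkey, hs1]
  rw [smul_dotProduct, Matrix.mulVec_smul, smul_smul, smul_eq_mul]
  have hscal : (Real.sqrt (r0 ⬝ᵥ r0))⁻¹ * (r0 ⬝ᵥ r0) * (Real.sqrt (r0 ⬝ᵥ r0))⁻¹ = 1 := by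
    field_simp
    exact hsq.symm
  rw [hscal, one_smul, hr0, Matrix.mulVec_sub, Matrix.mulVec_mulVec,
    Matrix.nonsing_inv_mul _ ((Matrix.isUnit_iff_isUnit_det _).mp hA), Matrix.one_mulVec]
  abel
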